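/- Let V : ℝ → ℝ be continuous and satisfy lim_{x→±∞} V(x)/(|x|+1) = +∞. Then there exists a constant c_V ∈ ℝ such that for all t, s ∈ ℝ with t ≠ s, (1/2)log|t−s|^{−1} + (1/2)log|e^t−e^s|^{−1} + (1/2)V(t) + (1/2)V(s) ≥ c_V. -/

import Mathlib

open Filter

private lemma g_tendsto {V : ℝ → ℝ} {l : Filter ℝ}
    (h : Tendsto (fun x => V x / (|x| + 1)) l atTop) :
    Tendsto (fun x => V x - Real.log (1 + |x|) - |x|) l atTop := by
  rw [tendsto_atTop]
  intro b
  filter_upwards [h.eventually_ge_atTop (max b 0 + 2)] with x hx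
  have hpos : (0:ℝ) < |x| + 1 := by positivity
  have hV : (max b 0 + 2) * (|x| + 1) ≤ V x := by
    rw [le_div_iff₀ hpos] at hx; linarith
  have hlog : Real.log (1 + |x|) ≤ |x| := by
    have := Real.log_le_sub_one_of_pos (show (0:ℝ) < 1 + |x| by positivity)
    linarith
  have h1 : (0:ℝ) ≤ max b 0 := le_max_right _ _
  have h2 : b ≤ max b 0 := le_max_left _ _
  nlinarith [abs_nonneg x]

/-- If `V : ℝ → ℝ` is continuous and `V(x)/(|x|+1) → +∞` as `x → ±∞`, then
the energy kernel `k_V(t,s) = ½log|t−s|⁻¹ + ½log|eᵗ−eˢ|⁻¹ + ½V(t) + ½V(s)` is bounded below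
off the diagonal. -/
theorem kernel_bounded_below
    (V : ℝ → ℝ) (hcont : Continuous V)
    (hgrowth : Tendsto (fun x => V x / (|x| + 1)) atTop atTop ∧
      Tendsto (fun x => V x / (|x| + 1)) atBot atTop) :
    ∃ cV : ℝ, ∀ t s : ℝ, t ≠ s →
      cV ≤ 1/2 * (-Real.log |t - s|) + 1/2 * (-Real.log |Real.exp t - Real.exp s|)
        + 1/2 * V t + 1/2 * V s := by
  set g : ℝ → ℝ := fun x => V x - Real.log (1 + |x|) - |x| with hg
  have hgcont : Continuous g := by
    apply (hcont.sub (Continuous.log (by continuity)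
      (fun x => by positivity))).sub continuous_abs
  have hgtend : Tendsto g (cocompact ℝ) atTop := by
    rw [cocompact_eq_atBot_atTop, tendsto_sup]
    exact ⟨g_tendsto hgrowth.2, g_tendsto hgrowth.1⟩
  obtain ⟨x₀, hx₀⟩ := hgcont.exists_forall_le hgtend
  refine ⟨g x₀ - 1/2 * Real.log 2, fun t s hts => ?_⟩
  have hts' : |t - s| > 0 := abs_pos.2 (sub_ne_zero.2 hts)
  have hexp_ne : Real.exp t ≠ Real.exp s := fun h => hts (Real.exp_injective h)
  have hets : |Real.exp t - Real.exp s| > 0 := abs_pos.2 (sub_ne_zero.2 hexp_ne)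
  -- bound log |t - s|
  have h1 : Real.log |t - s| ≤ Real.log (1 + |t|) + Real.log (1 + |s|) := by
    have hle : |t - s| ≤ (1 + |t|) * (1 + |s|) := by
      have : |t - s| ≤ |t| + |s| := by
        calc |t - s| = |t + -s| := by ring_nf
        _ ≤ |t| + |-s| := abs_add_le _ _
        _ = |t| + |s| := by rw [abs_neg]
      nlinarith [abs_nonneg t, abs_nonneg s]
    calc Real.log |t - s| ≤ Real.log ((1 + |t|) * (1 + |s|)) :=
          Real.log_le_log hts' hle
      _ = Real.log (1 + |t|) + Real.log (1 + |s|) :=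
          Real.log_mul (by positivity) (by positivity)
  -- bound log |exp t - exp s|
  have h2 : Real.log |Real.exp t - Real.exp s| ≤ Real.log 2 + (|t| + |s|) := by
    have hle : |Real.exp t - Real.exp s| ≤ 2 * Real.exp (|t| + |s|) := by
      have ht' : Real.exp t ≤ Real.exp (|t| + |s|) :=
        Real.exp_le_exp.2 (by cases abs_cases t with
          | inl h => cases abs_cases s with
            | inl h2 => linarith [h.1, h2.1]
            | inr h2 => linarith [h.1, h2.1, abs_nonneg s]
          | inr h => linarith [h.1, le_abs_self t, abs_nonneg s])
      have hs' : Real.exp s ≤ Real.exp (|t| + |s|) :=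
        Real.exp_le_exp.2 (by linarith [le_abs_self s, abs_nonneg t])
      have h0t := Real.exp_pos t
      have h0s := Real.exp_pos s
      cases abs_cases (Real.exp t - Real.exp s) with
      | inl h => linarith [h.1]
      | inr h => linarith [h.1]
    calc Real.log |Real.exp t - Real.exp s| ≤ Real.log (2 * Real.exp (|t| + |s|)) :=
          Real.log_le_log hets hle
      _ = Real.log 2 + (|t| + |s|) := by
          rw [Real.log_mul (by norm_num) (Real.exp_pos _).ne', Real.log_exp]
  have hgt := hx₀ t
  have hgs := hx₀ s
  simp only [hg] at hgt hgs
  linarith
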